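/- Let X be an integrable real-valued random variable on a probability space (Ω, F, P) with E[exp(zX)] < ∞ for all z > 0, and let β ∈ (0,1). Then CVaR_β(X) ≤ EVaR_β(X); that is, the Entropic Value-at-Risk is an upper bound for the Conditional Value-at-Risk. -/

import Mathlib

open MeasureTheory

/-- Conditional Value-at-Risk at level `β`: `CVaR_β(X) := inf_z E[z + (X - z)⁺ / β]`. -/
noncomputable def CVaR {Ω : Type*} [MeasurableSpace Ω] (P : Measure Ω) (β : ℝ) (X : Ω → ℝ) : ℝ :=
  ⨅ z : ℝ, (z + (∫ ω, max (X ω - z) 0 ∂P) / β)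

/-- Entropic Value-at-Risk at level `β`: `EVaR_β(X) := inf_{z > 0} z⁻¹ ln (E[exp (z X)] / β)`. -/
noncomputable def EVaR {Ω : Type*} [MeasurableSpace Ω] (P : Measure Ω) (β : ℝ) (X : Ω → ℝ) : ℝ :=
  ⨅ z : Set.Ioi (0 : ℝ), ((z : ℝ)⁻¹ * Real.log ((∫ ω, Real.exp ((z : ℝ) * X ω) ∂P) / β))

/-- `CVaR_β(X) ≤ EVaR_β(X)` for integrable `X` with finite mgf on `(0,∞)` and `β ∈ (0,1)`. -/
theorem stmt_11 {Ω : Type*} [MeasurableSpace Ω] (P : Measure Ω) [IsProbabilityMeasure P]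
    (X : Ω → ℝ) (hX : Measurable X) (hint : Integrable X P)
    (hmgf : ∀ z : ℝ, 0 < z → Integrable (fun ω => Real.exp (z * X ω)) P)
    {β : ℝ} (hβ : β ∈ Set.Ioo (0 : ℝ) 1) :
    CVaR P β X ≤ EVaR P β X := by
  obtain ⟨hβ0, hβ1⟩ := hβ
  have hmax : ∀ c : ℝ, Integrable (fun ω => max (X ω - c) 0) P := fun c =>
    (hint.sub (integrable_const c)).pos_part
  -- lower bound : every CVaR candidate is ≥ ∫ X
  have hbdd : BddBelow (Set.range fun c : ℝ => c + (∫ ω, max (X ω - c) 0 ∂P) / β) := by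
    refine ⟨∫ ω, X ω ∂P, ?_⟩
    rintro _ ⟨c, rfl⟩
    have h1 : ∫ ω, X ω ∂P - c ≤ ∫ ω, max (X ω - c) 0 ∂P := by
      have h := integral_mono (f := fun ω => X ω - c) (g := fun ω => max (X ω - c) 0)
        (hint.sub (integrable_const c)) (hmax c) (fun ω => le_max_left (X ω - c) 0)
      rwa [integral_sub hint (integrable_const c), integral_const, probReal_univ,
        one_smul] at h
    have h0 : 0 ≤ ∫ ω, max (X ω - c) 0 ∂P :=
      integral_nonneg fun ω => le_max_right _ _
    have h2 : ∫ ω, max (X ω - c) 0 ∂P ≤ (∫ ω, max (X ω - c) 0 ∂P) / β := by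
      rw [le_div_iff₀ hβ0]
      exact mul_le_of_le_one_right h0 hβ1.le
    linarith
  apply le_ciInf
  rintro ⟨z, hz⟩
  simp only [Set.mem_Ioi] at hz
  show CVaR P β X ≤ z⁻¹ * Real.log ((∫ ω, Real.exp (z * X ω) ∂P) / β)
  set M : ℝ := ∫ ω, Real.exp (z * X ω) ∂P with hM
  have hMint := hmgf z hz
  have hMpos : 0 < M := integral_exp_pos hMint
  have hMβ : 0 < M / β := div_pos hMpos hβ0
  set w : ℝ := z⁻¹ * (Real.log (M / β) - 1) with hw
  have key : CVaR P β X ≤ w + (∫ ω, max (X ω - w) 0 ∂P) / β := ciInf_le hbdd w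
  have hzw : z * w = Real.log (M / β) - 1 := by
    rw [hw, ← mul_assoc, mul_inv_cancel₀ hz.ne', one_mul]
  have hexp : Real.exp (-(z * w) - 1) = β / M := by
    rw [hzw, show -(Real.log (M / β) - 1) - 1 = -Real.log (M / β) by ring,
      Real.exp_neg, Real.exp_log hMβ, inv_div]
  -- pointwise bound
  have hpt : ∀ ω, max (X ω - w) 0 ≤ β / M * Real.exp (z * X ω) / z := by
    intro ω
    rw [le_div_iff₀ hz]
    have h1 : max (X ω - w) 0 * z = max (z * (X ω - w)) 0 := by
      rw [max_mul_of_nonneg _ _ hz.le, zero_mul, mul_comm]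
    have h2 : max (z * (X ω - w)) 0 ≤ Real.exp (z * (X ω - w) - 1) := by
      refine max_le ?_ (Real.exp_pos _).le
      linarith [Real.add_one_le_exp (z * (X ω - w) - 1)]
    have h3 : Real.exp (z * (X ω - w) - 1) = β / M * Real.exp (z * X ω) := by
      rw [show z * (X ω - w) - 1 = (z * X ω) + (-(z * w) - 1) by ring,
        Real.exp_add, hexp, mul_comm]
    rw [h1]; rw [h3] at h2; exact h2
  have hint2 : Integrable (fun ω => β / M * Real.exp (z * X ω) / z) P :=
    (hMint.const_mul _).div_const _
  have hIle : ∫ ω, max (X ω - w) 0 ∂P ≤ β / z := by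
    have := integral_mono (hmax w) hint2 hpt
    rwa [integral_div, integral_const_mul, div_mul_cancel₀ _ hMpos.ne'] at this
  have hfin : w + (β / z) / β = z⁻¹ * Real.log (M / β) := by
    rw [hw]
    field_simp
    ring
  refine key.trans (le_of_le_of_eq ?_ hfin)
  have h2 : (∫ ω, max (X ω - w) 0 ∂P) / β ≤ (β / z) / β :=
    (div_le_div_iff_of_pos_right hβ0).mpr hIle
  linarith
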